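/- Under the assumption Σ_{x|yz} ≺ D ⪯ Σ_{x|z} (all symmetric positive definite), the rate-distortion lower bound (1/2) Σᵢ log((λ₍ᵢ₎/λ'₍ᵢ₎)⁺) equals the closed form (1/2) log(|Σ_{x|z} − Σ_{x|yz}| / |D − Σ_{x|yz}|), where λ₍ᵢ₎, λ'₍ᵢ₎ are the sorted joint diagonal entries of Σ_{x|z} − Σ_{x|yz} and D − Σ_{x|yz} under simultaneous diagonalization. -/

import Mathlib

open Matrix

/-- Sorted dominance: if `a i ≥ b i` pointwise and `as`, `bs` are antitone
rearrangements of `a`, `b`, then `as k ≥ bs k` for every `k`. -/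
lemma sorted_dominance {n : ℕ} (a b as bs : Fin n → ℝ)
    (hab : ∀ i, b i ≤ a i)
    (has : Antitone as) (hbs : Antitone bs)
    (σ τ : Equiv.Perm (Fin n)) (hσ : as = a ∘ σ) (hτ : bs = b ∘ τ)
    (k : Fin n) : bs k ≤ as k := by
  by_contra hlt
  push_neg at hlt
  set c := bs k with hc
  -- indices j with as j ≥ c lie strictly below k
  have hA : (Finset.univ.filter (fun j : Fin n => c ≤ as j)) ⊆ Finset.Iio k := by
    intro j hj
    simp only [Finset.mem_filter] at hj
    simp only [Finset.mem_Iio]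
    by_contra hk
    push_neg at hk
    exact absurd (hj.2.trans (has hk)) (not_le.mpr hlt)
  have hAcard : (Finset.univ.filter (fun j : Fin n => c ≤ as j)).card ≤ (k : ℕ) := by
    have := Finset.card_le_card hA
    simpa [Fin.card_Iio] using this
  -- via σ, same count for a
  have hcount : (Finset.univ.filter (fun i : Fin n => c ≤ a i)).card
      = (Finset.univ.filter (fun j : Fin n => c ≤ as j)).card := by
    apply Finset.card_bij (fun i _ => σ.symm i)
    · intro i hi
      simp only [Finset.mem_filter, Finset.mem_univ, true_and] at hi ⊢
      simpa [hσ] using hi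
    · intro i _ j _ h
      exact σ.symm.injective h
    · intro j hj
      refine ⟨σ j, ?_, by simp⟩
      simp only [Finset.mem_filter, Finset.mem_univ, true_and] at hj ⊢
      simpa [hσ] using hj
  -- but τ gives at least k+1 indices i with a i ≥ c
  have hBig : Finset.Iic k ⊆ (Finset.univ.filter (fun i : Fin n => c ≤ a i)).image τ.symm := by
    intro j hj
    simp only [Finset.mem_Iic] at hj
    refine Finset.mem_image.mpr ⟨τ j, ?_, by simp⟩
    simp only [Finset.mem_filter, Finset.mem_univ, true_and]
    calc c = bs k := rfl
      _ ≤ bs j := hbs hj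
      _ = b (τ j) := by rw [hτ]; rfl
      _ ≤ a (τ j) := hab _
  have hBcard : (k : ℕ) + 1 ≤ (Finset.univ.filter (fun i : Fin n => c ≤ a i)).card := by
    have h1 := Finset.card_le_card hBig
    have h2 := Finset.card_image_le (s := Finset.univ.filter (fun i : Fin n => c ≤ a i))
      (f := τ.symm)
    have : (Finset.Iic k).card = (k : ℕ) + 1 := by simp [Fin.card_Iic]
    omega
  omega

/-- **Corollary 1.** Under `Sxyz ≺ D ⪯ Sxz`, the lower bound
`(1/2) ∑ log ((lams i / lams' i)⁺)` (with `(x)⁺ := max x 1` and `lams`, `lams'`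
the decreasingly sorted joint diagonal entries of `Sxz - Sxyz` and `D - Sxyz`)
equals the closed form `(1/2) log (det (Sxz - Sxyz) / det (D - Sxyz))`. -/
theorem lower_bound_closed_form
    {n : ℕ} (Sxyz D Sxz V : Matrix (Fin n) (Fin n) ℝ)
    (hSxyz : Sxyz.PosDef) (hD : D.PosDef) (hSxz : Sxz.PosDef)
    (h1 : (D - Sxyz).PosDef)
    (h2 : (Sxz - D).PosSemidef)
    (h3 : (Sxz - Sxyz).PosDef)
    (hV : IsUnit V)
    (lam lam' : Fin n → ℝ)
    (hVlam : V * (Sxz - Sxyz) * Vᵀ = Matrix.diagonal lam)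
    (hVlam' : V * (D - Sxyz) * Vᵀ = Matrix.diagonal lam')
    (lams lams' : Fin n → ℝ)
    (hlams_sorted : Antitone lams) (hlams'_sorted : Antitone lams')
    (hlams : ∃ σ : Equiv.Perm (Fin n), lams = lam ∘ σ)
    (hlams' : ∃ σ : Equiv.Perm (Fin n), lams' = lam' ∘ σ) :
    (1/2 : ℝ) * ∑ i, Real.log (max (lams i / lams' i) 1) =
      (1/2 : ℝ) * Real.log ((Sxz - Sxyz).det / (D - Sxyz).det) := by
  obtain ⟨σ, hσ⟩ := hlams
  obtain ⟨τ, hτ⟩ := hlams'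
  have hVdet : V.det ≠ 0 := by
    simpa [Matrix.isUnit_iff_isUnit_det, isUnit_iff_ne_zero] using hV
  have hVT : Vᵀ = Vᴴ := by simp [Matrix.conjTranspose_eq_transpose_of_trivial]
  -- positivity of lam, lam'
  have hdet1 : (Matrix.diagonal lam).det = V.det ^ 2 * (Sxz - Sxyz).det := by
    rw [← hVlam, Matrix.det_mul, Matrix.det_mul, Matrix.det_transpose]; ring
  have hdet2 : (Matrix.diagonal lam').det = V.det ^ 2 * (D - Sxyz).det := by
    rw [← hVlam', Matrix.det_mul, Matrix.det_mul, Matrix.det_transpose]; ring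
  have hlampos : ∀ i, 0 < lam i := by
    have hpsd : (Matrix.diagonal lam).PosSemidef := by
      rw [← hVlam, hVT]; exact h3.posSemidef.mul_mul_conjTranspose_same V
    have hnn := Matrix.posSemidef_diagonal_iff.mp hpsd
    have hprod : ∀ i, lam i ≠ 0 := by
      intro i hi
      have : (Matrix.diagonal lam).det = 0 := by
        simp [Matrix.det_diagonal]
        exact Finset.prod_eq_zero (Finset.mem_univ i) hi
      rw [hdet1] at this
      exact (mul_ne_zero (pow_ne_zero 2 hVdet) (ne_of_gt h3.det_pos)) this
    exact fun i => lt_of_le_of_ne (hnn i) (Ne.symm (hprod i))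
  have hlam'pos : ∀ i, 0 < lam' i := by
    have hpsd : (Matrix.diagonal lam').PosSemidef := by
      rw [← hVlam', hVT]; exact h1.posSemidef.mul_mul_conjTranspose_same V
    have hnn := Matrix.posSemidef_diagonal_iff.mp hpsd
    have hprod : ∀ i, lam' i ≠ 0 := by
      intro i hi
      have : (Matrix.diagonal lam').det = 0 := by
        simp [Matrix.det_diagonal]
        exact Finset.prod_eq_zero (Finset.mem_univ i) hi
      rw [hdet2] at this
      exact (mul_ne_zero (pow_ne_zero 2 hVdet) (ne_of_gt h1.det_pos)) this
    exact fun i => lt_of_le_of_ne (hnn i) (Ne.symm (hprod i))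
  -- pointwise dominance lam' ≤ lam
  have hdom : ∀ i, lam' i ≤ lam i := by
    have hsub : Matrix.diagonal lam - Matrix.diagonal lam' = V * (Sxz - D) * Vᵀ := by
      rw [← hVlam, ← hVlam']
      noncomm_ring
    have hpsd : (Matrix.diagonal lam - Matrix.diagonal lam').PosSemidef := by
      rw [hsub, hVT]; exact h2.mul_mul_conjTranspose_same V
    have : Matrix.diagonal lam - Matrix.diagonal lam' = Matrix.diagonal (lam - lam') := by
      simp [Matrix.diagonal_sub]
    rw [this] at hpsd
    intro i
    have := Matrix.posSemidef_diagonal_iff.mp hpsd i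
    simpa [sub_nonneg] using this
  -- sorted dominance
  have hsdom : ∀ k, lams' k ≤ lams k :=
    sorted_dominance lam lam' lams lams' hdom hlams_sorted hlams'_sorted σ τ hσ hτ
  have hlamspos : ∀ i, 0 < lams i := fun i => by rw [hσ]; exact hlampos _
  have hlams'pos : ∀ i, 0 < lams' i := fun i => by rw [hτ]; exact hlam'pos _
  -- remove the max
  have hmax : ∀ i, max (lams i / lams' i) 1 = lams i / lams' i := fun i =>
    max_eq_left ((one_le_div (hlams'pos i)).mpr (hsdom i))
  simp_rw [hmax]
  congr 1
  -- split logs and resum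
  have hsplit : ∀ i, Real.log (lams i / lams' i) = Real.log (lams i) - Real.log (lams' i) :=
    fun i => Real.log_div (ne_of_gt (hlamspos i)) (ne_of_gt (hlams'pos i))
  simp_rw [hsplit, Finset.sum_sub_distrib]
  have e1 : ∑ i, Real.log (lams i) = ∑ i, Real.log (lam i) := by
    rw [hσ]; exact Equiv.sum_comp σ (fun i => Real.log (lam i))
  have e2 : ∑ i, Real.log (lams' i) = ∑ i, Real.log (lam' i) := by
    rw [hτ]; exact Equiv.sum_comp τ (fun i => Real.log (lam' i))
  rw [e1, e2]
  have p1 : ∑ i, Real.log (lam i) = Real.log (∏ i, lam i) :=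
    (Real.log_prod (fun i _ => ne_of_gt (hlampos i))).symm
  have p2 : ∑ i, Real.log (lam' i) = Real.log (∏ i, lam' i) :=
    (Real.log_prod (fun i _ => ne_of_gt (hlam'pos i))).symm
  rw [p1, p2, ← Real.log_div (ne_of_gt (Finset.prod_pos (fun i _ => hlampos i)))
    (ne_of_gt (Finset.prod_pos (fun i _ => hlam'pos i)))]
  congr 1
  have q1 : ∏ i, lam i = V.det ^ 2 * (Sxz - Sxyz).det := by
    rw [← hdet1, Matrix.det_diagonal]
  have q2 : ∏ i, lam' i = V.det ^ 2 * (D - Sxyz).det := by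
    rw [← hdet2, Matrix.det_diagonal]
  rw [q1, q2, mul_div_mul_left _ _ (pow_ne_zero 2 hVdet)]
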